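/- For every integer n ≥ 5, the function y ↦ (|y|² − 1)/(1 + |y|²)^{n−1} is Lebesgue-integrable on ℝ^n, and the number a_n := ∫_{ℝ^n} (|y|² − 1)/(1 + |y|²)^{n−1} dy is strictly positive. -/

import Mathlib

open MeasureTheory Set Real

lemma aux_integrableOn (k m : ℕ) (h : k + 2 ≤ 2 * m) :
    IntegrableOn (fun x : ℝ => x ^ k / (1 + x ^ 2) ^ m) (Ioi 0) := by
  have hcont : Continuous fun x : ℝ => x ^ k / (1 + x ^ 2) ^ m := by
    apply Continuous.div (by continuity) (by continuity)
    intro x; positivity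
  have h1 : IntegrableOn (fun x : ℝ => x ^ k / (1 + x ^ 2) ^ m) (Ioc 0 1) :=
    hcont.integrableOn_Ioc
  have h2 : IntegrableOn (fun x : ℝ => x ^ k / (1 + x ^ 2) ^ m) (Ioi 1) := by
    refine Integrable.mono' (g := fun x : ℝ => x ^ ((k : ℝ) - 2 * m))
      (integrableOn_Ioi_rpow_of_lt (by
        have : (k:ℝ) + 2 ≤ 2 * m := by exact_mod_cast h
        linarith) one_pos)
      (hcont.aestronglyMeasurable.restrict) ?_
    filter_upwards [ae_restrict_mem measurableSet_Ioi] with x hx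
    have hx1 : (1 : ℝ) < x := hx
    have hx0 : (0 : ℝ) < x := by linarith
    rw [Real.rpow_sub hx0, Real.rpow_natCast,
      show ((2 : ℝ) * m) = ((2 * m : ℕ) : ℝ) by push_cast; ring, Real.rpow_natCast]
    simp only [norm_div, norm_pow, Real.norm_eq_abs]
    have hb : x ^ (2 * m) ≤ (1 + x ^ 2) ^ m := by
      rw [pow_mul]
      gcongr
      nlinarith
    rw [abs_of_pos hx0, abs_of_pos (by positivity : (0:ℝ) < 1 + x ^ 2)]
    exact div_le_div_of_nonneg_left (by positivity) (by positivity) hb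
  exact ((h1.union h2).mono_set (fun x hx => by
    rcases le_or_gt x 1 with h' | h'
    · exact Or.inl ⟨hx, h'⟩
    · exact Or.inr h'))

lemma radial_pos (m : ℕ) :
    0 < ∫ x in Ioi (0 : ℝ), x ^ (m + 4) * ((x ^ 2 - 1) / (1 + x ^ 2) ^ (m + 4)) := by
  set g : ℝ → ℝ := fun x => x ^ (m + 4) * ((x ^ 2 - 1) / (1 + x ^ 2) ^ (m + 4)) with hg
  set h : ℝ → ℝ := fun x => x ^ m * ((1 - x ^ 2) / (1 + x ^ 2) ^ (m + 4)) with hh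
  set F : ℝ → ℝ := fun x => x ^ m * ((x ^ 2 - 1) ^ 2 / (1 + x ^ 2) ^ (m + 3)) with hF
  have hgi : IntegrableOn g (Ioi 0) := by
    refine Integrable.mono' (g := fun x => x ^ (m + 4) / (1 + x ^ 2) ^ (m + 3))
      (aux_integrableOn (m + 4) (m + 3) (by omega))
      ?_ ?_
    · exact (Continuous.aestronglyMeasurable (by
        apply Continuous.mul (by continuity)
        apply Continuous.div (by continuity) (by continuity)
        intro x; positivity)).restrict
    · filter_upwards [ae_restrict_mem measurableSet_Ioi] with x hx
      have hx0 : (0 : ℝ) < x := hx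
      have hne : (1 + x ^ 2 : ℝ) ≠ 0 := by positivity
      have habs : |x ^ 2 - 1| ≤ 1 + x ^ 2 := by
        rw [abs_le]; constructor <;> nlinarith [sq_nonneg x]
      simp only [hg, norm_mul, norm_div, norm_pow, Real.norm_eq_abs]
      rw [abs_of_pos hx0, abs_of_pos (by positivity : (0:ℝ) < 1 + x ^ 2)]
      calc x ^ (m+4) * (|x ^ 2 - 1| / (1 + x ^ 2) ^ (m + 4))
          ≤ x ^ (m+4) * ((1 + x ^ 2) / (1 + x ^ 2) ^ (m + 4)) := by gcongr
        _ = x ^ (m+4) / (1 + x ^ 2) ^ (m + 3) := by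
            field_simp
            ring
  have hhi : IntegrableOn h (Ioi 0) := by
    refine Integrable.mono' (g := fun x => x ^ m / (1 + x ^ 2) ^ (m + 3))
      (aux_integrableOn m (m + 3) (by omega))
      ?_ ?_
    · exact (Continuous.aestronglyMeasurable (by
        apply Continuous.mul (by continuity)
        apply Continuous.div (by continuity) (by continuity)
        intro x; positivity)).restrict
    · filter_upwards [ae_restrict_mem measurableSet_Ioi] with x hx
      have hx0 : (0 : ℝ) < x := hx
      have hne : (1 + x ^ 2 : ℝ) ≠ 0 := by positivity
      have habs : |1 - x ^ 2| ≤ 1 + x ^ 2 := by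
        rw [abs_le]; constructor <;> nlinarith [sq_nonneg x]
      simp only [hh, norm_mul, norm_div, norm_pow, Real.norm_eq_abs]
      rw [abs_of_pos hx0, abs_of_pos (by positivity : (0:ℝ) < 1 + x ^ 2)]
      calc x ^ m * (|1 - x ^ 2| / (1 + x ^ 2) ^ (m + 4))
          ≤ x ^ m * ((1 + x ^ 2) / (1 + x ^ 2) ^ (m + 4)) := by gcongr
        _ = x ^ m / (1 + x ^ 2) ^ (m + 3) := by
            field_simp
            ring
  have hFi : IntegrableOn F (Ioi 0) := by
    have : ∀ x ∈ Ioi (0:ℝ), g x + h x = F x := by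
      intro x hx
      have hx0 : (0 : ℝ) < x := hx
      have hne : (1 + x ^ 2 : ℝ) ≠ 0 := by positivity
      rw [hg, hh, hF]
      field_simp
      ring
    exact IntegrableOn.congr_fun (hgi.add hhi) (fun x hx => this x hx) measurableSet_Ioi
  -- substitution x ↦ x⁻¹
  have hsub : ∫ x in Ioi (0:ℝ), g x = ∫ x in Ioi (0:ℝ), h x := by
    rw [← integral_comp_rpow_Ioi g (p := -1) (by norm_num)]
    refine setIntegral_congr_fun measurableSet_Ioi ?_
    intro x hx
    have hx0 : (0 : ℝ) < x := hx
    have hxne : x ≠ 0 := hx0.ne'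
    have h1 : x ^ (-1 : ℝ) = x⁻¹ := Real.rpow_neg_one x
    have h2 : x ^ ((-1 : ℝ) - 1) = (x ^ 2)⁻¹ := by
      rw [show ((-1 : ℝ) - 1) = -((2:ℕ):ℝ) by norm_num, Real.rpow_neg hx0.le,
        Real.rpow_natCast]
    simp only [smul_eq_mul, abs_neg, abs_one, one_mul, hg, hh, h1, h2]
    have hne : (1 + x ^ 2 : ℝ) ≠ 0 := by positivity
    have hne2 : (1 + (x⁻¹) ^ 2 : ℝ) ≠ 0 := by positivity
    rw [show (1 + (x⁻¹) ^ 2 : ℝ) = (1 + x ^ 2) / x ^ 2 by field_simp; ring]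
    simp only [inv_pow, div_pow, pow_succ]
    field_simp
    ring
  have hsum : (∫ x in Ioi (0:ℝ), g x) + ∫ x in Ioi (0:ℝ), h x = ∫ x in Ioi (0:ℝ), F x := by
    rw [← integral_add hgi hhi]
    refine setIntegral_congr_fun measurableSet_Ioi ?_
    intro x hx
    have hx0 : (0 : ℝ) < x := hx
    have hne : (1 + x ^ 2 : ℝ) ≠ 0 := by positivity
    simp only [hg, hh, hF]
    field_simp
    ring
  have hFpos : 0 < ∫ x in Ioi (0:ℝ), F x := by
    rw [setIntegral_pos_iff_support_of_nonneg_ae ?_ hFi]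
    · refine lt_of_lt_of_le ?_ (measure_mono (?_ : Ioi (2:ℝ) ⊆ Function.support F ∩ Ioi 0))
      · simp [Real.volume_Ioi]
      · intro x hx
        have hx2 : (2 : ℝ) < x := hx
        have hx0 : (0 : ℝ) < x := by linarith
        refine ⟨?_, hx0⟩
        simp only [Function.mem_support, hF]
        have h3 : (0:ℝ) < x ^ 2 - 1 := by nlinarith
        have : (0:ℝ) < x ^ m * ((x ^ 2 - 1) ^ 2 / (1 + x ^ 2) ^ (m + 3)) := by positivity
        exact this.ne'
    · filter_upwards [ae_restrict_mem measurableSet_Ioi] with x hx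
      have hx0 : (0 : ℝ) < x := hx
      simp only [hF]
      positivity
  have : 0 < 2 * ∫ x in Ioi (0:ℝ), g x := by
    rw [two_mul]; nth_rewrite 2 [hsub]; rw [hsum]; exact hFpos
  linarith

/-- For every `n ≥ 5`, the function `y ↦ (|y|²−1)/(1+|y|²)^(n−1)` is Lebesgue-integrable
on `ℝⁿ` and `a_n := ∫_{ℝⁿ} (|y|²−1)/(1+|y|²)^(n−1) dy > 0`. -/
theorem integrable_and_pos_a_n (n : ℕ) (hn : 5 ≤ n) :
    Integrable (fun y : EuclideanSpace ℝ (Fin n) => (‖y‖ ^ 2 - 1) / (1 + ‖y‖ ^ 2) ^ (n - 1)) ∧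
      0 < ∫ y : EuclideanSpace ℝ (Fin n), (‖y‖ ^ 2 - 1) / (1 + ‖y‖ ^ 2) ^ (n - 1) := by
  haveI : Nonempty (Fin n) := ⟨⟨0, by omega⟩⟩
  constructor
  · -- integrability
    set r : ℝ := ((2 * n - 4 : ℕ) : ℝ) with hr
    have hnr : ((Module.finrank ℝ (EuclideanSpace ℝ (Fin n))) : ℝ) < r := by
      rw [finrank_euclideanSpace_fin, hr]
      exact_mod_cast (by omega : n < 2 * n - 4)
    refine Integrable.mono'
      ((integrable_one_add_norm (E := EuclideanSpace ℝ (Fin n)) hnr).const_mul ((2:ℝ) ^ (n - 2)))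
      ?_ ?_
    · refine Continuous.aestronglyMeasurable ?_
      apply Continuous.div (by continuity) (by continuity)
      intro y; positivity
    · filter_upwards with y
      set t : ℝ := ‖y‖ with ht
      have ht0 : 0 ≤ t := norm_nonneg y
      have h1 : ‖(t ^ 2 - 1) / (1 + t ^ 2) ^ (n - 1)‖ ≤ 1 / (1 + t ^ 2) ^ (n - 2) := by
        simp only [norm_div, norm_pow, Real.norm_eq_abs]
        rw [abs_of_pos (by positivity : (0:ℝ) < 1 + t ^ 2)]
        rw [div_le_div_iff₀ (by positivity) (by positivity), one_mul,
          show n - 1 = (n - 2) + 1 by omega, pow_succ (1 + t ^ 2) (n - 2)]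
        have habs : |t ^ 2 - 1| ≤ 1 + t ^ 2 := by
          rw [abs_le]; constructor <;> nlinarith
        have hp : (0:ℝ) < (1 + t ^ 2) ^ (n - 2) := by positivity
        nlinarith [abs_nonneg (t ^ 2 - 1)]
      refine h1.trans ?_
      have h2 : (1 + t) ^ (-r) = ((1 + t) ^ (2 * n - 4 : ℕ))⁻¹ := by
        rw [hr, Real.rpow_neg (by positivity), Real.rpow_natCast]
      rw [h2, show (2 * n - 4) = 2 * (n - 2) by omega, pow_mul, one_div]
      have h3 : ((1 + t) ^ 2) ^ (n - 2) ≤ (2 * (1 + t ^ 2)) ^ (n - 2) := by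
        gcongr
        nlinarith [sq_nonneg (1 - t)]
      calc ((1 + t ^ 2 : ℝ) ^ (n - 2))⁻¹ = (2:ℝ) ^ (n-2) * ((2 * (1 + t ^ 2)) ^ (n - 2))⁻¹ := by
            rw [mul_pow, mul_inv, ← mul_assoc, mul_inv_cancel₀ (by positivity), one_mul]
        _ ≤ (2:ℝ) ^ (n-2) * (((1 + t) ^ 2) ^ (n - 2))⁻¹ := by
            exact mul_le_mul_of_nonneg_left
              (inv_anti₀ (pow_pos (by positivity) _) h3) (by positivity)
  · -- positivity
    obtain ⟨m, rfl⟩ : ∃ m, n = m + 5 := ⟨n - 5, by omega⟩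
    have key := MeasureTheory.integral_fun_norm_addHaar
      (volume : Measure (EuclideanSpace ℝ (Fin (m + 5))))
      (fun t : ℝ => (t ^ 2 - 1) / (1 + t ^ 2) ^ (m + 5 - 1))
    simp only [finrank_euclideanSpace_fin] at key
    rw [show (fun y : EuclideanSpace ℝ (Fin (m+5)) => (‖y‖ ^ 2 - 1) / (1 + ‖y‖ ^ 2) ^ (m + 5 - 1))
      = fun y : EuclideanSpace ℝ (Fin (m+5)) =>
        (fun t : ℝ => (t ^ 2 - 1) / (1 + t ^ 2) ^ (m + 5 - 1)) ‖y‖ from rfl]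
    rw [key, nsmul_eq_mul, smul_eq_mul]
    have hb : 0 < (volume (Metric.ball (0 : EuclideanSpace ℝ (Fin (m+5))) 1)).toReal :=
      ENNReal.toReal_pos (Metric.measure_ball_pos volume 0 one_pos).ne' measure_ball_lt_top.ne
    have hrad : 0 < ∫ x in Ioi (0:ℝ), x ^ (m + 5 - 1) •
        ((fun t : ℝ => (t ^ 2 - 1) / (1 + t ^ 2) ^ (m + 5 - 1)) x) := by
      simp only [smul_eq_mul, show m + 5 - 1 = m + 4 by omega]
      exact radial_pos m
    positivity
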